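/- In the leaf-order setup for a connected generalized block graph G (with leaf F_r, branches F_{t_1},…,F_{t_q}, and common intersection A of cardinality α), the set A is a minimal cut set of G, and for every subset T ⊆ [n] with the cut point property for G one has either A ⊆ T or A ∩ T = ∅. -/

import Mathlib

open scoped TensorProduct

namespace GBEI

/-! ### Graph-theoretic notions -/

/-- Number of connected components of a graph. -/
noncomputable def ncomp {V : Type} (G : SimpleGraph V) : ℕ :=
  Nat.card G.ConnectedComponent

/-- Number of connected components of the induced subgraph on the complement of `T`. -/
noncomputable def ncompDel {V : Type} (G : SimpleGraph V) (T : Finset V) : ℕ :=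
  Nat.card (G.induce ((↑T : Set V)ᶜ)).ConnectedComponent

/-- `T` is a cut set: deleting `T` increases the number of connected components. -/
def IsCutSet {V : Type} (G : SimpleGraph V) (T : Finset V) : Prop :=
  ncomp G < ncompDel G T

/-- `T` is a cut set which is minimal with respect to inclusion. -/
def IsMinimalCutSet {V : Type} (G : SimpleGraph V) (T : Finset V) : Prop :=
  IsCutSet G T ∧ ∀ T' ⊆ T, IsCutSet G T' → T' = T

/-- `aCount G i` is the number of minimal cut sets of `G` of cardinality `i`. -/
noncomputable def aCount {V : Type} (G : SimpleGraph V) (i : ℕ) : ℕ :=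
  Set.ncard {T : Finset V | IsMinimalCutSet G T ∧ T.card = i}

/-- `T` has the cut point property: for every `i ∈ T`,
`c(T \ {i}) < c(T)` where `c(T)` is the number of connected components of `G` restricted
to the complement of `T`. -/
def HasCutPointProperty {V : Type} [DecidableEq V] (G : SimpleGraph V) (T : Finset V) : Prop :=
  ∀ i ∈ T, ncompDel G (T.erase i) < ncompDel G T

/-- A graph is chordal if it has no induced cycle of length at least 4. -/
def Chordal {V : Type} (G : SimpleGraph V) : Prop :=
  ∀ k : ℕ, 4 ≤ k → IsEmpty (SimpleGraph.cycleGraph k ↪g G)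

/-- A maximal clique of `G`, as a finite set of vertices. -/
def IsMaxClique {V : Type} (G : SimpleGraph V) (s : Finset V) : Prop :=
  G.IsClique (↑s : Set V) ∧ ∀ t : Finset V, G.IsClique (↑t : Set V) → s ⊆ t → s = t

/-- A generalized block graph: a chordal graph in which, for any three (distinct) maximal
cliques with nonempty common intersection, the pairwise intersections all coincide. -/
def IsGeneralizedBlockGraph {V : Type} [DecidableEq V] (G : SimpleGraph V) : Prop :=
  Chordal G ∧
    ∀ F₁ F₂ F₃ : Finset V, IsMaxClique G F₁ → IsMaxClique G F₂ → IsMaxClique G F₃ →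
      F₁ ≠ F₂ → F₁ ≠ F₃ → F₂ ≠ F₃ → (F₁ ∩ F₂ ∩ F₃).Nonempty →
      F₁ ∩ F₂ = F₂ ∩ F₃ ∧ F₁ ∩ F₃ = F₂ ∩ F₃

/-- A block graph: a chordal graph in which any two distinct maximal cliques meet in at
most one vertex. -/
def IsBlockGraph {V : Type} [DecidableEq V] (G : SimpleGraph V) : Prop :=
  Chordal G ∧
    ∀ F₁ F₂ : Finset V, IsMaxClique G F₁ → IsMaxClique G F₂ → F₁ ≠ F₂ → (F₁ ∩ F₂).card ≤ 1

/-- The complete graph on a finite set `B` of vertices (with all other vertices isolated). -/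
def cliqueOn {V : Type} (B : Finset V) : SimpleGraph V where
  Adj u v := u ≠ v ∧ u ∈ B ∧ v ∈ B
  symm := ⟨fun u v ⟨h1, h2, h3⟩ => ⟨h1.symm, h3, h2⟩⟩
  loopless := ⟨fun u h => h.1 rfl⟩

/-- The graph obtained from `G` by deleting all vertices in `A` (keeping the ambient
vertex type; deleted vertices become isolated). Its edges are exactly the edges of the
induced subgraph of `G` on the complement of `A`. -/
def delVerts {V : Type} (G : SimpleGraph V) (A : Finset V) : SimpleGraph V where
  Adj u v := G.Adj u v ∧ u ∉ A ∧ v ∉ A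
  symm := ⟨fun u v ⟨h1, h2, h3⟩ => ⟨h1.symm, h3, h2⟩⟩
  loopless := ⟨fun u h => G.loopless.1 u h.1⟩

/-! ### The polynomial ring and generalized binomial edge ideals -/

/-- The polynomial ring `K[x_{kj} : 1 ≤ k ≤ m, 1 ≤ j ≤ n]`; the variable type carries the
lexicographic order in which `x_{11}` is the smallest index (hence the largest variable for
the induced lexicographic monomial order). -/
abbrev PolyS (K : Type) [Field K] (m n : ℕ) : Type := MvPolynomial (Fin m ×ₗ Fin n) K

/-- The variable `x_{kj}`. -/
noncomputable def xv (K : Type) [Field K] {m n : ℕ} (k : Fin m) (j : Fin n) : PolyS K m n :=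
  MvPolynomial.X (toLex (k, j))

/-- The 2-minor `[k,l|i,j] = x_{ki} x_{lj} - x_{li} x_{kj}`. -/
noncomputable def pminor (K : Type) [Field K] {m n : ℕ} (k l : Fin m) (i j : Fin n) :
    PolyS K m n :=
  xv K k i * xv K l j - xv K l i * xv K k j

/-- The generalized binomial edge ideal `𝔍_G` of a graph `G` on `[n]`. -/
noncomputable def gbei (K : Type) [Field K] (m : ℕ) {n : ℕ} (G : SimpleGraph (Fin n)) :
    Ideal (PolyS K m n) :=
  Ideal.span {f | ∃ (k l : Fin m) (i j : Fin n),
    k < l ∧ i < j ∧ G.Adj i j ∧ f = pminor K k l i j}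

/-- The ideal generated by the variables `x_{kj}`, `1 ≤ k ≤ m`, `j ∈ A`. -/
noncomputable def varsIdeal (K : Type) [Field K] (m : ℕ) {n : ℕ} (A : Finset (Fin n)) :
    Ideal (PolyS K m n) :=
  Ideal.span {f | ∃ (k : Fin m) (j : Fin n), j ∈ A ∧ f = xv K k j}

/-! ### Lexicographic initial ideals -/

/-- `d` is the exponent vector of the lexicographic leading monomial of `p`, for the
lexicographic order with `x_{11} > ⋯ > x_{1n} > x_{21} > ⋯ > x_{mn}`. -/
def IsLeadExp (K : Type) [Field K] {m n : ℕ} (p : PolyS K m n)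
    (d : (Fin m ×ₗ Fin n) →₀ ℕ) : Prop :=
  d ∈ p.support ∧ ∀ e ∈ p.support, e ≠ d → toLex e < toLex d

/-- The initial ideal of `I` with respect to the lexicographic order: the ideal generated
by the leading monomials of the nonzero elements of `I`. -/
noncomputable def iniIdeal (K : Type) [Field K] {m n : ℕ} (I : Ideal (PolyS K m n)) :
    Ideal (PolyS K m n) :=
  Ideal.span {f | ∃ p ∈ I, ∃ d, IsLeadExp K p d ∧ f = MvPolynomial.monomial d (1 : K)}

/-! ### Projective dimension, depth and Castelnuovo–Mumford regularity -/

/-- `M` admits a resolution `0 → F_k → ⋯ → F_1 → F_0 → M → 0` by finitely generated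
free `R`-modules. -/
def HasFreeResLen (R : Type) [CommRing R] (M : Type) [AddCommGroup M] [Module R M]
    (k : ℕ) : Prop :=
  ∃ (ι : ℕ → Type) (_ : ∀ i, Finite (ι i))
    (d : ∀ i : ℕ, (ι (i + 1) →₀ R) →ₗ[R] (ι i →₀ R)) (ε : (ι 0 →₀ R) →ₗ[R] M),
      (∀ i, k < i → IsEmpty (ι i)) ∧
      Function.Surjective ε ∧
      Function.Exact (d 0) ε ∧
      ∀ i, Function.Exact (d (i + 1)) (d i)

/-- The projective dimension of `M`: the smallest possible length of a finite free
resolution of `M`. -/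
noncomputable def projDim (R : Type) [CommRing R] (M : Type) [AddCommGroup M]
    [Module R M] : ℕ :=
  sInf {k | HasFreeResLen R M k}

/-- The depth of `S/I` (with respect to the irrelevant maximal ideal), via the
Auslander–Buchsbaum formula: `depth S/I = (number of variables) - projdim S/I`. -/
noncomputable def depthQuot {σ : Type} (K : Type) [Field K] (I : Ideal (MvPolynomial σ K)) :
    ℕ :=
  Nat.card σ - projDim (MvPolynomial σ K) (MvPolynomial σ K ⧸ I)

/-- `S/I` admits a graded free resolution (by finitely generated graded free modules,
with generator degrees `degs`) in which all shifts `j` occurring in homological degree `i`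
satisfy `j ≤ r + i`.  The minimum of all such `r` is the Castelnuovo–Mumford regularity
`max { j - i : β_{ij}(S/I) ≠ 0 }`. -/
def HasGradedFreeResRegLE {σ : Type} (K : Type) [Field K] (I : Ideal (MvPolynomial σ K))
    (r : ℕ) : Prop :=
  ∃ (len : ℕ) (ι : ℕ → Type) (_ : ∀ i, Finite (ι i)) (degs : ∀ i, ι i → ℕ)
    (d : ∀ i : ℕ, (ι (i + 1) →₀ MvPolynomial σ K) →ₗ[MvPolynomial σ K] (ι i →₀ MvPolynomial σ K))
    (ε : (ι 0 →₀ MvPolynomial σ K) →ₗ[MvPolynomial σ K] (MvPolynomial σ K ⧸ I)),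
      (∀ i, len < i → IsEmpty (ι i)) ∧
      Function.Surjective ε ∧
      Function.Exact (d 0) ε ∧
      (∀ i, Function.Exact (d (i + 1)) (d i)) ∧
      (∀ a : ι 0, ∃ p : MvPolynomial σ K,
        p.IsHomogeneous (degs 0 a) ∧ ε (Finsupp.single a 1) = Ideal.Quotient.mk I p) ∧
      (∀ (i : ℕ) (a : ι (i + 1)) (b : ι i),
        (d i (Finsupp.single a 1)) b = 0 ∨
        ∃ e, e + degs i b = degs (i + 1) a ∧ ((d i (Finsupp.single a 1)) b).IsHomogeneous e) ∧
      (∀ (i : ℕ) (a : ι i), degs i a ≤ r + i)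

/-- The Castelnuovo–Mumford regularity of `S/I`. -/
noncomputable def regQuot {σ : Type} (K : Type) [Field K] (I : Ideal (MvPolynomial σ K)) :
    ℕ :=
  sInf {r | HasGradedFreeResRegLE K I r}

/-- The height of a prime ideal `P` (junk value `0` if `P` is not prime). -/
noncomputable def primeHeight {R : Type} [CommRing R] (P : Ideal R) : ℕ∞ :=
  ⨆ h : P.IsPrime, Order.height (⟨P, h⟩ : PrimeSpectrum R)

/-- An ideal is unmixed if all of its minimal primes have the same height. -/
def IsUnmixed {R : Type} [CommRing R] (I : Ideal R) : Prop :=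
  ∀ P ∈ I.minimalPrimes, ∀ Q ∈ I.minimalPrimes, primeHeight P = primeHeight Q

end GBEI

namespace GBEI

/-- The generalized binomial edge ideal of (the restriction of) `G` inside the polynomial
ring `K[x_{kj} : 1 ≤ k ≤ m, j ∈ V]` on a subset `V` of the vertices. -/
noncomputable def gbeiOn (K : Type) [Field K] (m : ℕ) {n : ℕ} (G : SimpleGraph (Fin n))
    (V : Set (Fin n)) : Ideal (MvPolynomial (Fin m × V) K) :=
  Ideal.span {f | ∃ (k l : Fin m) (i j : V),
    k < l ∧ (i : Fin n) < (j : Fin n) ∧ G.Adj (i : Fin n) (j : Fin n) ∧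
    f = MvPolynomial.X (k, i) * MvPolynomial.X (l, j) -
        MvPolynomial.X (l, i) * MvPolynomial.X (k, j)}

/-- The degree-`dd` homogeneous component of `S/I`, the image of the space of homogeneous
polynomials of degree `dd`. -/
noncomputable def quotDeg {σ : Type} (K : Type) [Field K] (I : Ideal (MvPolynomial σ K))
    (dd : ℕ) : Submodule K (MvPolynomial σ K ⧸ I) :=
  Submodule.map (Ideal.Quotient.mkₐ K I).toLinearMap (MvPolynomial.homogeneousSubmodule σ K dd)

/-- The minimal prime `P_T(G)` of `𝔍_G` associated with a set `T` having the cut point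
property: it is generated by the variables `x_{kj}`, `j ∈ T`, together with the 2-minors
`[k,l|i,j]` for all pairs `i < j` of vertices lying in a common connected component of the
restriction of `G` to the complement of `T`. -/
noncomputable def cutPrime (K : Type) [Field K] (m : ℕ) {n : ℕ} (G : SimpleGraph (Fin n))
    (T : Finset (Fin n)) : Ideal (PolyS K m n) :=
  Ideal.span ({f | ∃ (k : Fin m) (j : Fin n), j ∈ T ∧ f = xv K k j} ∪
    {f | ∃ (k l : Fin m) (i j : Fin n) (hi : i ∈ ((↑T : Set (Fin n))ᶜ))
      (hj : j ∈ ((↑T : Set (Fin n))ᶜ)),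
      k < l ∧ i < j ∧ (G.induce ((↑T : Set (Fin n))ᶜ)).Reachable ⟨i, hi⟩ ⟨j, hj⟩ ∧
      f = pminor K k l i j})


lemma exists_maxClique_cont {n : ℕ} (G : SimpleGraph (Fin n)) {x y : Fin n} (h : G.Adj x y) :
    ∃ s : Finset (Fin n), IsMaxClique G s ∧ x ∈ s ∧ y ∈ s := by
  classical
  set S : Set (Finset (Fin n)) := {s | G.IsClique (↑s : Set (Fin n)) ∧ x ∈ s ∧ y ∈ s} with hSdef
  have hS : S.Finite := Set.toFinite S
  have hne : S.Nonempty := by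
    refine ⟨{x, y}, ?_, by simp, by simp⟩
    intro u hu v hv huv
    simp only [Finset.coe_insert, Finset.coe_singleton, Set.mem_insert_iff,
      Set.mem_singleton_iff] at hu hv
    rcases hu with rfl | rfl <;> rcases hv with rfl | rfl
    · exact absurd rfl huv
    · exact h
    · exact h.symm
    · exact absurd rfl huv
  obtain ⟨s, hsS, hmax⟩ := Set.Finite.exists_maximalFor id S hS hne
  refine ⟨s, ⟨hsS.1, ?_⟩, hsS.2.1, hsS.2.2⟩
  intro u hu hsu
  exact Finset.Subset.antisymm hsu (hmax ⟨hu, hsu hsS.2.1, hsu hsS.2.2⟩ hsu)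

lemma walk_surgery {V : Type} (G : SimpleGraph V) (S : Set V) (a : V) (ha : a ∈ S) :
    ∀ (N : ℕ) ⦃x y : V⦄ (w : G.Walk x y), w.length ≤ N →
      (∀ c ∈ w.support, c ∉ S → ∀ x' : V, G.Adj x' c → x' = a ∨ G.Adj x' a) →
      ∀ (hx : x ∈ S) (hy : y ∈ S),
      (G.induce S).Reachable ⟨x, hx⟩ ⟨y, hy⟩ := by
  intro N
  induction N with
  | zero =>
    intro x y w hlen _ hx hy
    cases w with
    | nil => exact SimpleGraph.Reachable.refl _
    | cons h w' => simp [SimpleGraph.Walk.length_cons] at hlen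
  | succ N ih =>
    intro x y w hlen hrep hx hy
    cases w with
    | nil => exact SimpleGraph.Reachable.refl _
    | @cons _ v _ h w' =>
      by_cases hv : v ∈ S
      · have step : (G.induce S).Adj ⟨x, hx⟩ ⟨v, hv⟩ := h
        have hrep' : ∀ c ∈ w'.support, c ∉ S → ∀ x' : V, G.Adj x' c → x' = a ∨ G.Adj x' a :=
          fun c hc => hrep c (by simp [SimpleGraph.Walk.support_cons, hc])
        exact step.reachable.trans
          (ih w' (by simpa [SimpleGraph.Walk.length_cons] using hlen) hrep' hv hy)
      · have hxa : x = a ∨ G.Adj x a := hrep v (by simp) hv x h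
        cases w' with
        | nil => exact absurd hy hv
        | @cons _ v2 _ h2 w'' =>
          have hv2a : v2 = a ∨ G.Adj v2 a :=
            hrep v (by simp) hv v2 h2.symm
          have hsub'' : ∀ c ∈ w''.support, c ∉ S → ∀ x' : V, G.Adj x' c → x' = a ∨ G.Adj x' a :=
            fun c hc => hrep c (by simp [SimpleGraph.Walk.support_cons, hc])
          have hlen2 : w''.length + 1 ≤ N := by
            simp only [SimpleGraph.Walk.length_cons] at hlen; omega
          have hlen'' : w''.length ≤ N := by omega
          have hay : (G.induce S).Reachable ⟨a, ha⟩ ⟨y, hy⟩ := by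
            rcases hv2a with rfl | hadj
            · exact ih w'' hlen'' hsub'' ha hy
            · refine ih (SimpleGraph.Walk.cons hadj.symm w'') (by simpa using hlen2) ?_ ha hy
              intro c hc hcS x' hadj'
              rcases (by simpa [SimpleGraph.Walk.support_cons] using hc : c = a ∨ c ∈ w''.support)
                with rfl | hc'
              · exact absurd ha hcS
              · exact hsub'' c hc' hcS x' hadj'
          rcases hxa with rfl | hadj
          · exact hay
          · exact (show (G.induce S).Adj ⟨x, hx⟩ ⟨a, ha⟩ from hadj).reachable.trans hay


/-- in the leaf-order setup, `A` is a minimal cut set of `G`, and every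
set `T` with the cut point property satisfies `A ⊆ T` or `A ∩ T = ∅`. -/
theorem leafOrder_inter_isMinimalCutSet
    (n r q α : ℕ) (hn : 2 ≤ n) (hr : 1 < r) (hq : 1 ≤ q) (hα : 1 ≤ α)
    (G : SimpleGraph (Fin n)) (hGconn : G.Connected) (hgb : IsGeneralizedBlockGraph G)
    (F : Fin r → Finset (Fin n))
    (hmc : ∀ i, IsMaxClique G (F i))
    (hFinj : Function.Injective F)
    (hFall : ∀ s : Finset (Fin n), IsMaxClique G s → ∃ i, F i = s)
    (lst : Fin r) (hlst : ∀ i : Fin r, i ≤ lst)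
    (hleaf : ∀ i : Fin r, (i : ℕ) ≠ 0 → ∃ j, j < i ∧ ∀ k, k < i → F k ∩ F i ⊆ F j ∩ F i)
    (t : Fin q → Fin r) (htinj : Function.Injective t) (htne : ∀ i, t i ≠ lst)
    (hbr : ∀ k : Fin r, k ≠ lst → ((∃ i, t i = k) ↔ (F k ∩ F lst).Nonempty))
    (A : Finset (Fin n)) (hcard : A.card = α)
    (hA1 : ∀ i, F (t i) ∩ F lst = A)
    (hA2 : ∀ i j, i ≠ j → F (t i) ∩ F (t j) = A) :
    IsMinimalCutSet G A ∧
    ∀ T : Finset (Fin n), HasCutPointProperty G T → A ⊆ T ∨ A ∩ T = ∅ := by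
  classical
  set i0 : Fin q := ⟨0, hq⟩ with hi0
  have hAlst : A ⊆ F lst := by rw [← hA1 i0]; exact Finset.inter_subset_right
  have hAt0 : A ⊆ F (t i0) := by rw [← hA1 i0]; exact Finset.inter_subset_left
  have ht0 : F (t i0) ≠ F lst := fun h => htne i0 (hFinj h)
  -- Lemma K: every maximal clique containing a vertex of A contains A
  have keyK : ∀ s : Finset (Fin n), IsMaxClique G s → ∀ c, c ∈ A → c ∈ s → A ⊆ s := by
    intro s hs c hcA hcs
    obtain ⟨k, rfl⟩ := hFall s hs
    by_cases hk : k = lst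
    · subst hk; exact hAlst
    · have hne : (F k ∩ F lst).Nonempty := ⟨c, Finset.mem_inter.mpr ⟨hcs, hAlst hcA⟩⟩
      obtain ⟨i, rfl⟩ := (hbr k hk).mpr hne
      rw [← hA1 i]; exact Finset.inter_subset_left
  -- replacement property
  have hrep : ∀ c ∈ A, ∀ b ∈ A, ∀ x' : Fin n, G.Adj x' c → x' = b ∨ G.Adj x' b := by
    intro c hc b hb x' hadj
    obtain ⟨s, hs, hxs, hcs⟩ := exists_maxClique_cont G hadj
    have hAs := keyK s hs c hc hcs
    by_cases hxb : x' = b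
    · exact Or.inl hxb
    · exact Or.inr (hs.1 (Finset.mem_coe.mpr hxs) (Finset.mem_coe.mpr (hAs hb)) hxb)
  -- frontier property
  have hfront : ∀ x y : Fin n, x ∈ F lst → x ∉ A → G.Adj x y → y ∉ A → y ∈ F lst := by
    intro x y hxF hxA hadj hyA
    obtain ⟨s, hs, hxs, hys⟩ := exists_maxClique_cont G hadj
    obtain ⟨k, rfl⟩ := hFall s hs
    by_cases hk : k = lst
    · subst hk; exact hys
    · have hne : (F k ∩ F lst).Nonempty := ⟨x, Finset.mem_inter.mpr ⟨hxs, hxF⟩⟩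
      obtain ⟨i, rfl⟩ := (hbr k hk).mpr hne
      exact absurd ((hA1 i) ▸ Finset.mem_inter.mpr ⟨hxs, hxF⟩) hxA
  -- vertices v ∈ F lst \ A, w ∈ F t0 \ (F lst ∪ A)
  have hv : ∃ v, v ∈ F lst ∧ v ∉ A := by
    by_contra hcon; push_neg at hcon
    have hsub : F lst ⊆ F (t i0) := fun x hx => hAt0 (hcon x hx)
    exact ht0 (((hmc lst).2 (F (t i0)) (hmc (t i0)).1 hsub).symm)
  obtain ⟨v, hvF, hvA⟩ := hv
  have hw' : ∃ w, w ∈ F (t i0) ∧ w ∉ A := by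
    by_contra hcon; push_neg at hcon
    have hsub : F (t i0) ⊆ F lst := fun x hx => hAlst (hcon x hx)
    exact ht0 ((hmc (t i0)).2 (F lst) (hmc lst).1 hsub)
  obtain ⟨w, hwF, hwA⟩ := hw'
  have hwlst : w ∉ F lst := fun hwl => hwA ((hA1 i0) ▸ Finset.mem_inter.mpr ⟨hwF, hwl⟩)
  -- ncomp G = 1
  have hone : ncomp G = 1 := by
    rw [ncomp, Nat.card_eq_one_iff_unique]
    exact ⟨hGconn.preconnected.subsingleton_connectedComponent,
      ⟨G.connectedComponentMk ⟨0, by omega⟩⟩⟩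
  have hAcomplv : v ∈ ((↑A : Set (Fin n))ᶜ) := by simpa using hvA
  have hAcomplw : w ∈ ((↑A : Set (Fin n))ᶜ) := by simpa using hwA
  -- walks in the induced graph on Aᶜ starting in F lst stay in F lst
  have hstay : ∀ (x y : ((↑A : Set (Fin n))ᶜ : Set (Fin n)))
      (p : (G.induce ((↑A : Set (Fin n))ᶜ)).Walk x y),
      (x : Fin n) ∈ F lst → (y : Fin n) ∈ F lst := by
    intro x y p
    induction p with
    | nil => exact id
    | @cons x u y hadj p ih =>
      intro hx
      exact ih (hfront _ _ hx (fun hm => x.2 (Finset.mem_coe.mpr hm)) hadj (fun hm => u.2 (Finset.mem_coe.mpr hm)))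
  have hcut : IsCutSet G A := by
    rw [IsCutSet, hone, ncompDel, Finite.one_lt_card_iff_nontrivial]
    refine ⟨(G.induce ((↑A : Set (Fin n))ᶜ)).connectedComponentMk ⟨v, hAcomplv⟩,
      (G.induce ((↑A : Set (Fin n))ᶜ)).connectedComponentMk ⟨w, hAcomplw⟩, fun heq => ?_⟩
    obtain ⟨p⟩ := (SimpleGraph.ConnectedComponent.eq).mp heq
    exact hwlst (hstay _ _ p hvF)
  -- proper subsets of A are not cut sets
  have hnotcut : ∀ T' : Finset (Fin n), T' ⊆ A → T' ≠ A → ¬ IsCutSet G T' := by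
    intro T' hsub hne hcutT
    obtain ⟨a, haA, haT⟩ : ∃ a, a ∈ A ∧ a ∉ T' := by
      by_contra hcon; push_neg at hcon
      exact hne (Finset.Subset.antisymm hsub hcon)
    have haS : a ∈ ((↑T' : Set (Fin n))ᶜ) := by simpa using haT
    have hconn2 : Subsingleton (G.induce ((↑T' : Set (Fin n))ᶜ)).ConnectedComponent := by
      constructor
      intro c d
      refine SimpleGraph.ConnectedComponent.ind₂ (fun u v' => ?_) c d
      obtain ⟨p⟩ := hGconn.preconnected ↑u ↑v'
      have hcond : ∀ c' ∈ p.support, c' ∉ ((↑T' : Set (Fin n))ᶜ) →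
          ∀ x', G.Adj x' c' → x' = a ∨ G.Adj x' a := by
        intro c' _ hcS x' hadj
        exact hrep c' (hsub (by simpa using hcS)) a haA x' hadj
      have hr := walk_surgery G _ a haS p.length p le_rfl hcond u.2 v'.2
      exact SimpleGraph.ConnectedComponent.sound hr
    have hone' : ncompDel G T' = 1 := by
      rw [ncompDel, Nat.card_eq_one_iff_unique]
      exact ⟨hconn2, ⟨(G.induce ((↑T' : Set (Fin n))ᶜ)).connectedComponentMk ⟨a, haS⟩⟩⟩
    rw [IsCutSet, hone, hone'] at hcutT
    exact absurd hcutT (lt_irrefl 1)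
  refine ⟨⟨hcut, fun T' hsub hcutT => by_contra fun hne => (hnotcut T' hsub hne) hcutT⟩, ?_⟩
  -- Part 2
  intro T hT
  by_cases hsubT : A ⊆ T
  · exact Or.inl hsubT
  by_cases hintT : A ∩ T = ∅
  · exact Or.inr hintT
  exfalso
  obtain ⟨a, haAT⟩ := Finset.nonempty_iff_ne_empty.mpr hintT
  have haA : a ∈ A := (Finset.mem_inter.mp haAT).1
  have haT : a ∈ T := (Finset.mem_inter.mp haAT).2
  obtain ⟨b, hbA, hbT⟩ : ∃ b, b ∈ A ∧ b ∉ T := by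
    by_contra hcon; push_neg at hcon; exact hsubT hcon
  have hlt := hT a haT
  have hsubsets : ((↑T : Set (Fin n))ᶜ) ⊆ ((↑(T.erase a) : Set (Fin n))ᶜ) :=
    Set.compl_subset_compl.mpr (Finset.coe_subset.mpr (Finset.erase_subset a T))
  let hom : G.induce ((↑T : Set (Fin n))ᶜ) →g G.induce ((↑(T.erase a) : Set (Fin n))ᶜ) :=
    ⟨fun u => ⟨↑u, hsubsets u.2⟩, fun {u v'} h => h⟩
  have hinj : Function.Injective (SimpleGraph.ConnectedComponent.map hom) := by
    intro c d
    refine SimpleGraph.ConnectedComponent.ind₂ (fun u v' => ?_) c d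
    intro h
    rw [SimpleGraph.ConnectedComponent.map_mk, SimpleGraph.ConnectedComponent.map_mk,
      SimpleGraph.ConnectedComponent.eq] at h
    obtain ⟨p⟩ := h
    let incl : G.induce ((↑(T.erase a) : Set (Fin n))ᶜ) →g G := ⟨Subtype.val, fun h => h⟩
    have hcond : ∀ c' ∈ (p.map incl).support, c' ∉ ((↑T : Set (Fin n))ᶜ) →
        ∀ x', G.Adj x' c' → x' = b ∨ G.Adj x' b := by
      intro c' hc' hcS x' hadj
      have hcT : c' ∈ T := by simpa using hcS
      have hcnotE : c' ∉ T.erase a := by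
        rw [SimpleGraph.Walk.support_map] at hc'
        obtain ⟨u', hu', rfl⟩ := List.mem_map.mp hc'
        exact fun hm => u'.2 (Finset.mem_coe.mpr hm)
      have hca : c' = a := by
        by_contra hne'; exact hcnotE (Finset.mem_erase.mpr ⟨hne', hcT⟩)
      subst hca
      exact hrep c' haA b hbA x' hadj
    have hr := walk_surgery G _ b (by simpa using hbT) (p.map incl).length (p.map incl)
      le_rfl hcond u.2 v'.2
    exact SimpleGraph.ConnectedComponent.sound hr
  have hle := Nat.card_le_card_of_injective _ hinj
  rw [ncompDel, ncompDel] at hlt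
  exact absurd hlt (not_lt.mpr hle)


end GBEI
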